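/- Let T be a shape-regular simplex of diameter h_T in ℝ^d with vertices p_i, partitioned into subregions T_i associated to its vertices, and let v be affine on T. Define Π v as the piecewise constant function equal to v(p_i) on T_i. Then ‖v − Π v‖_{L²(T)} ≤ C h_T ‖∇v‖_{L²(T)} with C depending only on shape regularity. -/

import Mathlib

open MeasureTheory
open scoped RealInnerProductSpace

/-- L² lumping error estimate: for an affine `f` on a shape-regular simplex
`T` of diameter `h_T`, partitioned into the vertex regions `Tset i`, the
lumped interpolant `Pf` (taking the nodal value `f (v i)` on `Tset i`)
satisfies `‖f − Pf‖_{L²(T)} ≤ C h_T ‖∇f‖_{L²(T)}`. -/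
theorem stmt_9 (d : ℕ) (ρ : ℝ) (hρ : 0 < ρ) :
    ∃ C : ℝ, 0 < C ∧
      ∀ (v : Fin (d + 1) → EuclideanSpace ℝ (Fin d)), AffineIndependent ℝ v →
      ∀ T : Set (EuclideanSpace ℝ (Fin d)), T = convexHull ℝ (Set.range v) →
        (∃ z, Metric.ball z (ρ * Metric.diam T) ⊆ T) →
      ∀ Tset : Fin (d + 1) → Set (EuclideanSpace ℝ (Fin d)),
        (∀ i, Tset i ⊆ T) → (∀ i, MeasurableSet (Tset i)) →
        Pairwise (Function.onFun Disjoint Tset) → (⋃ i, Tset i) = T →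
      ∀ (a : EuclideanSpace ℝ (Fin d)) (b : ℝ) (f Pf : EuclideanSpace ℝ (Fin d) → ℝ),
        (∀ x, f x = ⟪a, x⟫ + b) →
        (∀ i, ∀ x ∈ Tset i, Pf x = f (v i)) →
        (∫ x in T, (f x - Pf x) ^ 2) ^ ((1:ℝ)/2) ≤
          C * Metric.diam T * (∫ x in T, ‖a‖ ^ 2) ^ ((1:ℝ)/2) := by
  refine ⟨1, one_pos, ?_⟩
  intro v hv T hT hball Tset hsub hmeas hdisj hunion a b f Pf hf hPf
  set D := Metric.diam T with hD
  have hD0 : 0 ≤ D := Metric.diam_nonneg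
  -- T is compact
  have hTcpt : IsCompact T := by
    rw [hT]
    exact (Set.finite_range v).isCompact_convexHull ℝ
  have hTmeas : MeasurableSet T := hTcpt.measurableSet
  have hTfin : volume T < ⊤ := hTcpt.measure_lt_top
  -- pointwise bound on T
  have hpt : ∀ x ∈ T, (f x - Pf x) ^ 2 ≤ D ^ 2 * ‖a‖ ^ 2 := by
    intro x hx
    have hx' : x ∈ ⋃ i, Tset i := hunion ▸ hx
    obtain ⟨i, hi⟩ := Set.mem_iUnion.mp hx'
    have hvi : v i ∈ T := by
      rw [hT]; exact subset_convexHull ℝ _ ⟨i, rfl⟩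
    have hPfx : Pf x = f (v i) := hPf i x hi
    have hdiff : f x - Pf x = ⟪a, x - v i⟫ := by
      rw [hPfx, hf, hf, inner_sub_right]; ring
    have habs : |f x - Pf x| ≤ ‖a‖ * D := by
      rw [hdiff]
      calc |⟪a, x - v i⟫| ≤ ‖a‖ * ‖x - v i‖ := abs_real_inner_le_norm a _
        _ ≤ ‖a‖ * D := by
          apply mul_le_mul_of_nonneg_left _ (norm_nonneg a)
          rw [← dist_eq_norm]
          exact Metric.dist_le_diam_of_mem hTcpt.isBounded hx hvi
    calc (f x - Pf x) ^ 2 = |f x - Pf x| ^ 2 := (sq_abs _).symm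
      _ ≤ (‖a‖ * D) ^ 2 := by
          apply pow_le_pow_left₀ (abs_nonneg _) habs
      _ = D ^ 2 * ‖a‖ ^ 2 := by ring
  -- integrability of the lumping error
  have hint : IntegrableOn (fun x => (f x - Pf x) ^ 2) T := by
    rw [← hunion]
    apply integrableOn_finite_iUnion.mpr
    intro i
    have h1 : IntegrableOn (fun x => (f x - f (v i)) ^ 2) T := by
      apply ContinuousOn.integrableOn_compact hTcpt
      apply Continuous.continuousOn
      have hfc : Continuous f := by
        have : f = fun x => ⟪a, x⟫ + b := funext hf
        rw [this]
        exact (continuous_const.inner continuous_id).add continuous_const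
      fun_prop
    refine (h1.mono_set (hsub i)).congr_fun ?_ (hmeas i)
    intro x hx
    simp only [hPf i x hx]
  have hconst : IntegrableOn (fun _ => D ^ 2 * ‖a‖ ^ 2) T := by
    exact (integrableOn_const_iff (C := D ^ 2 * ‖a‖ ^ 2) enorm_ne_top).mpr (Or.inr hTfin)
  have hle : (∫ x in T, (f x - Pf x) ^ 2) ≤ ∫ x in T, D ^ 2 * ‖a‖ ^ 2 :=
    setIntegral_mono_on hint hconst hTmeas hpt
  have hrhs : (∫ x in T, D ^ 2 * ‖a‖ ^ 2) = D ^ 2 * ∫ x in T, ‖a‖ ^ 2 :=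
    integral_const_mul _ _
  have hI0 : 0 ≤ ∫ x in T, ‖a‖ ^ 2 :=
    setIntegral_nonneg hTmeas fun x _ => sq_nonneg _
  have hL0 : 0 ≤ ∫ x in T, (f x - Pf x) ^ 2 :=
    setIntegral_nonneg hTmeas fun x hx => sq_nonneg _
  have key : (∫ x in T, (f x - Pf x) ^ 2) ^ ((1:ℝ)/2) ≤
      (D ^ 2 * ∫ x in T, ‖a‖ ^ 2) ^ ((1:ℝ)/2) := by
    apply Real.rpow_le_rpow hL0 (hrhs ▸ hle) (by norm_num)
  calc (∫ x in T, (f x - Pf x) ^ 2) ^ ((1:ℝ)/2)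
      ≤ (D ^ 2 * ∫ x in T, ‖a‖ ^ 2) ^ ((1:ℝ)/2) := key
    _ = (D ^ 2 : ℝ) ^ ((1:ℝ)/2) * (∫ x in T, ‖a‖ ^ 2) ^ ((1:ℝ)/2) :=
        Real.mul_rpow (sq_nonneg D) hI0
    _ = 1 * D * (∫ x in T, ‖a‖ ^ 2) ^ ((1:ℝ)/2) := by
        congr 1
        rw [one_mul, ← Real.rpow_natCast D 2, ← Real.rpow_mul hD0]
        norm_num
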